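/- arXiv:0801.2370 — 3 statements merged into one kernel-verified Lean document; each statement's English description precedes it below -/
import Mathlib

section
/- Blowing down preserves representing zero: if (c_1, ..., c_k) is a chain of integers with k ≥ 3, c_h = 1 for some 1 < h < k, and the continued fraction [c_1, ..., c_k] is well defined and equals 0, then the blown-down chain (c_1, ..., c_{h-1}−1, c_{h+1}−1, ..., c_k) also has well-defined continued fraction equal to 0. -/
/-- Hirzebruch–Jung continued fraction `[c_1,...,c_k] = c_1 - 1/[c_2,...,c_k]`,
`[c_k] = c_k`; returns `none` if the list is empty or a division by zero occurs. -/
def hjcf : List ℚ → Option ℚ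
  | [] => none
  | [c] => some c
  | c :: l@(_ :: _) =>
      (hjcf l).bind fun v => if v = 0 then none else some (c - 1 / v)

lemma hjcf_cons_ne_nil (c : ℚ) {m : List ℚ} (hm : m ≠ []) :
    hjcf (c :: m) = (hjcf m).bind fun v => if v = 0 then none else some (c - 1 / v) := by
  cases m with
  | nil => exact absurd rfl hm
  | cons d m' => simp [hjcf]

lemma hjcf_shift (c : ℚ) (l : List ℚ) :
    hjcf ((c - 1) :: l) = (hjcf (c :: l)).map (· - 1) := by
  cases l with
  | nil => simp [hjcf]
  | cons d l' =>
    rw [hjcf_cons_ne_nil (c - 1) (by simp), hjcf_cons_ne_nil c (by simp)]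
    cases hjcf (d :: l') with
    | none => rfl
    | some v =>
      by_cases hv : v = 0 <;> simp [hv]
      ring

lemma hjcf_core (a b : ℚ) (l : List ℚ) {x : ℚ}
    (h : hjcf (a :: 1 :: b :: l) = some x) :
    hjcf ((a - 1) :: (b - 1) :: l) = some x := by
  rw [hjcf_cons_ne_nil a (by simp)] at h
  rw [hjcf_cons_ne_nil 1 (by simp)] at h
  rw [hjcf_cons_ne_nil (a - 1) (by simp)]
  rw [hjcf_shift b l]
  cases e : hjcf (b :: l) with
  | none => rw [e] at h; simp at h
  | some v =>
    rw [e] at h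
    simp only [Option.bind_some] at h ⊢
    by_cases hv : v = 0
    · simp [hv] at h
    · rw [if_neg hv, Option.bind_some] at h
      by_cases hv1 : (1 : ℚ) - 1 / v = 0
      · rw [if_pos hv1] at h; simp at h
      · rw [if_neg hv1, Option.some_inj] at h
        have hv1' : v ≠ 1 := by
          intro hh; apply hv1; rw [hh]; norm_num
        have hvm : v - 1 ≠ 0 := sub_ne_zero.mpr hv1'
        simp only [Option.map_some]
        rw [Option.bind_some, if_neg hvm, Option.some_inj]
        rw [← h]
        field_simp
        ring

lemma hjcf_append_some {t : List ℚ} (ht : t ≠ []) :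
    ∀ (l : List ℚ) {y : ℚ}, hjcf (l ++ t) = some y → ∃ x, hjcf t = some x := by
  intro l
  induction l with
  | nil => intro y h; exact ⟨y, h⟩
  | cons c l ih =>
    intro y h
    rw [List.cons_append, hjcf_cons_ne_nil c (by simp [ht])] at h
    cases e : hjcf (l ++ t) with
    | none => rw [e] at h; simp at h
    | some v => exact ih e

lemma hjcf_append_congr {t t' : List ℚ} (ht : t ≠ []) (ht' : t' ≠ [])
    (h : hjcf t = hjcf t') : ∀ l : List ℚ, hjcf (l ++ t) = hjcf (l ++ t') := by
  intro l
  induction l with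
  | nil => simpa using h
  | cons c l ih =>
    rw [List.cons_append, List.cons_append,
      hjcf_cons_ne_nil c (by simp [ht]), hjcf_cons_ne_nil c (by simp [ht']), ih]

/-- Blowing down preserves representing zero: if an integer chain contains an
interior entry equal to `1` and its continued fraction is well defined and
equals `0`, then the chain obtained by removing that entry and decreasing both
neighbors by `1` also has well-defined continued fraction equal to `0`. -/
theorem blowdown_represents_zero (l₁ l₂ : List ℤ) (a b : ℤ)
    (h : hjcf ((l₁ ++ a :: 1 :: b :: l₂).map (fun c => (c : ℚ))) = some 0) :
    hjcf ((l₁ ++ (a - 1) :: (b - 1) :: l₂).map (fun c => (c : ℚ))) = some 0 := by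
  simp only [List.map_id', List.bind_eq_flatMap, List.flatMap_append, List.flatMap_cons,
    List.pure_def, List.singleton_append, Int.cast_one, Int.cast_sub] at h ⊢
  set L₁ := l₁.flatMap (fun a : ℤ => [(a : ℚ)])
  set L₂ := l₂.flatMap (fun a : ℤ => [(a : ℚ)])
  obtain ⟨x, hx⟩ := hjcf_append_some (t := (a : ℚ) :: 1 :: (b : ℚ) :: L₂) (by simp) L₁ h
  have hx' := hjcf_core (a : ℚ) (b : ℚ) L₂ hx
  have := hjcf_append_congr (t := (a : ℚ) :: 1 :: (b : ℚ) :: L₂)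
    (t' := ((a : ℚ) - 1) :: ((b : ℚ) - 1) :: L₂) (by simp) (by simp)
    (by rw [hx, hx']) L₁
  rw [← this, h]
end

section
/- More generally, for any real numbers (or rationals) c_1, ..., c_k with c_h = 1 for some 1 < h < k: if both continued fractions are well defined, then [c_1, ..., c_k] = [c_1, ..., c_{h-1}−1, c_{h+1}−1, ..., c_k]. -/
lemma hjcf_cons (c x : ℚ) (xs : List ℚ) :
    hjcf (c :: x :: xs) =
      (hjcf (x :: xs)).bind fun v => if v = 0 then none else some (c - 1 / v) := by
  conv_lhs => rw [hjcf]

lemma hjcf_cons' (c : ℚ) (l : List ℚ) (hl : l ≠ []) :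
    hjcf (c :: l) = (hjcf l).bind fun v => if v = 0 then none else some (c - 1 / v) := by
  cases l with
  | nil => exact absurd rfl hl
  | cons x xs => exact hjcf_cons c x xs

lemma hjcf_sub_one (b : ℚ) (l : List ℚ) :
    hjcf ((b - 1) :: l) = (hjcf (b :: l)).map (fun v => v - 1) := by
  cases l with
  | nil => simp [hjcf]
  | cons x xs =>
    rw [hjcf_cons, hjcf_cons]
    cases hjcf (x :: xs) with
    | none => rfl
    | some u =>
      by_cases hu : u = 0 <;> (simp [hu]; try ring)

lemma blowdown_nil (l₂ : List ℚ) (a b r r' : ℚ)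
    (h : hjcf (a :: 1 :: b :: l₂) = some r)
    (h' : hjcf ((a - 1) :: (b - 1) :: l₂) = some r') :
    r = r' := by
  rw [hjcf_cons, hjcf_cons, Option.bind_eq_some_iff] at h
  obtain ⟨w, hw, h⟩ := h
  rw [Option.bind_eq_some_iff] at hw
  obtain ⟨v, hv, hw⟩ := hw
  rw [hjcf_cons, hjcf_sub_one, hv, Option.map_some, Option.bind_eq_some_iff] at h'
  obtain ⟨w', hw', h'⟩ := h'
  obtain rfl : w' = v - 1 := by injection hw' with h0; exact h0.symm
  have hv0 : v ≠ 0 := by intro h0; rw [if_pos h0] at hw; exact nomatch hw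
  rw [if_neg hv0] at hw
  obtain rfl : w = 1 - 1 / v := by injection hw with h0; exact h0.symm
  have hw0 : 1 - 1 / v ≠ 0 := by
    intro h0; rw [if_pos h0] at h; exact nomatch h
  have hvm1 : v - 1 ≠ 0 := by
    intro h0
    apply hw0
    have : v = 1 := by linarith [sub_eq_zero.mp h0]
    rw [this]; norm_num
  rw [if_neg hw0] at h
  rw [if_neg hvm1] at h'
  obtain rfl : r = a - 1 / (1 - 1 / v) := by injection h with h; exact h.symm
  obtain rfl : r' = a - 1 - 1 / (v - 1) := by injection h' with h'; exact h'.symm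
  field_simp
  ring

/-- Invariance of the value of a continued fraction under blow-down: if a chain
of rationals contains an interior entry equal to `1`, and both the chain and
its blow-down (removing that entry and decreasing both neighbors by `1`) have
well-defined continued fractions, then the two values agree. -/
theorem blowdown_preserves_value (l₁ l₂ : List ℚ) (a b : ℚ) (r r' : ℚ)
    (h : hjcf (l₁ ++ a :: 1 :: b :: l₂) = some r)
    (h' : hjcf (l₁ ++ (a - 1) :: (b - 1) :: l₂) = some r') :
    r = r' := by
  induction l₁ generalizing r r' with
  | nil => exact blowdown_nil l₂ a b r r' h h'
  | cons c l₁ ih =>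
    rw [List.cons_append, hjcf_cons' c _ (by simp), Option.bind_eq_some_iff] at h h'
    obtain ⟨v, hv, h⟩ := h
    obtain ⟨v', hv', h'⟩ := h'
    obtain rfl : v = v' := ih v v' hv hv'
    rw [h] at h'
    simpa using h'
end

section
/- Let n > q > 0 be coprime integers, let N = ℤ² + ℤ·(1/n)(1, q) ⊂ ℝ², let σ ⊂ ℝ² be the cone spanned by (1,0) and (0,1), and let w ∈ ℤ² be a primitive generator of the dual semigroup σ^∨ ∩ M (M the dual lattice of N) which is an element of the Hilbert basis. Then the affine line H = { v ∈ ℝ² : ⟨v, w⟩ = 1 } contains at least one point of N. -/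
/-- The lattice `N = ℤ² + ℤ·(1/n)(1, q)` inside `ℝ²`. -/
def latticeN (n q : ℤ) : Set (ℝ × ℝ) :=
  {v | ∃ a b c : ℤ, v = ((a : ℝ) + (c : ℝ) / (n : ℝ), (b : ℝ) + (c : ℝ) * (q : ℝ) / (n : ℝ))}

/-- The dual lattice `M` of `N`: those `u ∈ ℝ²` pairing integrally with all of `N`. -/
def latticeM (n q : ℤ) : Set (ℝ × ℝ) :=
  {u | ∀ v ∈ latticeN n q, ∃ m : ℤ, v.1 * u.1 + v.2 * u.2 = (m : ℝ)}

/-- The semigroup `σ^∨ ∩ M`, where `σ` is the cone spanned by `(1,0)` and `(0,1)`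
(so `σ^∨` is the nonnegative quadrant). -/
def dualSemigroup (n q : ℤ) : Set (ℝ × ℝ) :=
  {u | u ∈ latticeM n q ∧ 0 ≤ u.1 ∧ 0 ≤ u.2}

lemma int_mem_dual (n q : ℤ) (hn : 0 < n) (x y : ℤ) (hx : 0 ≤ x) (hy : 0 ≤ y)
    (hdvd : n ∣ x + q * y) : ((x : ℝ), (y : ℝ)) ∈ dualSemigroup n q := by
  obtain ⟨k, hk⟩ := hdvd
  refine ⟨?_, show (0:ℝ) ≤ (x:ℝ) from by exact_mod_cast hx,
    show (0:ℝ) ≤ (y:ℝ) from by exact_mod_cast hy⟩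
  rintro v ⟨a, b, c, rfl⟩
  refine ⟨a * x + b * y + c * k, ?_⟩
  have hn' : (n : ℝ) ≠ 0 := by exact_mod_cast hn.ne'
  have hk' : (x : ℝ) + q * y = n * k := by exact_mod_cast hk
  field_simp
  push_cast
  linear_combination (c : ℝ) * hk'

/-- If `w` is a Hilbert basis element (an irreducible element) of `σ^∨ ∩ M`, then the
affine line `⟨·, w⟩ = 1` contains a point of the lattice `N`. -/
theorem height_one_line_meets_lattice (n q : ℤ) (hn : 0 < q) (hq : q < n)
    (hcop : IsCoprime n q) (w : ℤ × ℤ)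
    (hwS : ((w.1 : ℝ), (w.2 : ℝ)) ∈ dualSemigroup n q)
    (hw0 : w ≠ 0)
    (hirr : ¬∃ u v : ℝ × ℝ, u ∈ dualSemigroup n q ∧ v ∈ dualSemigroup n q ∧
      u ≠ 0 ∧ v ≠ 0 ∧ ((w.1 : ℝ), (w.2 : ℝ)) = u + v) :
    ∃ v ∈ latticeN n q, v.1 * (w.1 : ℝ) + v.2 * (w.2 : ℝ) = 1 := by
  have hn0 : 0 < n := hn.trans hq
  have hnR : (n : ℝ) ≠ 0 := by exact_mod_cast hn0.ne'
  have hw1 : 0 ≤ w.1 := by exact_mod_cast show (0:ℝ) ≤ (w.1:ℝ) from hwS.2.1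
  have hw2 : 0 ≤ w.2 := by exact_mod_cast show (0:ℝ) ≤ (w.2:ℝ) from hwS.2.2
  have hv0 : ((1 : ℝ) / n, (q : ℝ) / n) ∈ latticeN n q := ⟨0, 0, 1, by push_cast; ring_nf⟩
  obtain ⟨m, hm⟩ := hwS.1 _ hv0
  simp only at hm
  have hdm : w.1 + q * w.2 = n * m := by
    have : (w.1 : ℝ) + q * w.2 = n * m := by
      field_simp at hm
      linear_combination hm
    exact_mod_cast this
  set d : ℕ := Int.gcd (Int.gcd w.1 w.2) m with hd
  have hdne : d ≠ 0 := by
    intro h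
    apply hw0
    have h1 : Int.gcd w.1 w.2 = 0 := Nat.eq_zero_of_gcd_eq_zero_left h
    have h2 := Int.gcd_eq_zero_iff.mp h1
    exact Prod.ext h2.1 h2.2
  have hd1 : d = 1 := by
    by_contra hne
    set e : ℤ := (d : ℤ) with he
    have hd2 : 2 ≤ e := by omega
    have he1 : e ∣ w.1 := dvd_trans (Int.natCast_dvd_natCast.mpr (Nat.gcd_dvd_left _ _))
      (Int.gcd_dvd_left w.1 w.2)
    have he2 : e ∣ w.2 := dvd_trans (Int.natCast_dvd_natCast.mpr (Nat.gcd_dvd_left _ _))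
      (Int.gcd_dvd_right w.1 w.2)
    have he3 : e ∣ m := Int.gcd_dvd_right (Int.gcd w.1 w.2 : ℤ) m
    obtain ⟨x1, hx1⟩ := he1
    obtain ⟨x2, hx2⟩ := he2
    obtain ⟨x3, hx3⟩ := he3
    have hx1n : 0 ≤ x1 := by nlinarith
    have hx2n : 0 ≤ x2 := by nlinarith
    have hsum : x1 + q * x2 = n * x3 := by
      have hcanc : e * (x1 + q * x2) = e * (n * x3) := by
        linear_combination hdm - hx1 - q * hx2 + n * hx3
      exact mul_left_cancel₀ (by omega) hcanc
    apply hirr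
    refine ⟨((x1 : ℝ), (x2 : ℝ)), (((e-1) * x1 : ℤ), ((e-1) * x2 : ℤ)), ?_, ?_, ?_, ?_, ?_⟩
    · exact int_mem_dual n q hn0 x1 x2 hx1n hx2n ⟨x3, hsum⟩
    · exact int_mem_dual n q hn0 _ _ (by nlinarith) (by nlinarith)
        ⟨(e-1) * x3, by linear_combination (e-1) * hsum⟩
    · intro h
      apply hw0
      have h1 : (x1 : ℝ) = 0 := congrArg Prod.fst h
      have h2 : (x2 : ℝ) = 0 := congrArg Prod.snd h
      have h1' : x1 = 0 := by exact_mod_cast h1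
      have h2' : x2 = 0 := by exact_mod_cast h2
      apply Prod.ext <;> simp [hx1, hx2, h1', h2']
    · intro h
      apply hw0
      have h1 : (((e-1) * x1 : ℤ) : ℝ) = 0 := congrArg Prod.fst h
      have h2 : (((e-1) * x2 : ℤ) : ℝ) = 0 := congrArg Prod.snd h
      have h1' : (e-1) * x1 = 0 := by exact_mod_cast h1
      have h2' : (e-1) * x2 = 0 := by exact_mod_cast h2
      have he0 : e - 1 ≠ 0 := by omega
      have hx10 : x1 = 0 := (mul_eq_zero.mp h1').resolve_left he0
      have hx20 : x2 = 0 := (mul_eq_zero.mp h2').resolve_left he0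
      apply Prod.ext <;> simp [hx1, hx2, hx10, hx20]
    · apply Prod.ext <;> simp only [Prod.fst_add, Prod.snd_add] <;> push_cast
      · rw [hx1]; push_cast; ring
      · rw [hx2]; push_cast; ring
  -- Bezout
  have hcop2 : IsCoprime ((Int.gcd w.1 w.2 : ℤ)) m := Int.isCoprime_iff_gcd_eq_one.mpr hd1
  obtain ⟨s, t, hst⟩ := hcop2
  have hg : (Int.gcd w.1 w.2 : ℤ) = w.1 * Int.gcdA w.1 w.2 + w.2 * Int.gcdB w.1 w.2 :=
    Int.gcd_eq_gcd_ab w.1 w.2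
  set a : ℤ := s * Int.gcdA w.1 w.2
  set b : ℤ := s * Int.gcdB w.1 w.2
  set c : ℤ := t
  have key : a * w.1 + b * w.2 + c * m = 1 := by
    have : s * (w.1 * Int.gcdA w.1 w.2 + w.2 * Int.gcdB w.1 w.2) + t * m = 1 := by
      rw [← hg]; exact hst
    linear_combination this
  refine ⟨((a : ℝ) + c / n, (b : ℝ) + c * q / n), ⟨a, b, c, rfl⟩, ?_⟩
  have keyR : (a : ℝ) * w.1 + b * w.2 + c * m = 1 := by exact_mod_cast key
  have hdmR : (w.1 : ℝ) + q * w.2 = n * m := by exact_mod_cast hdm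
  field_simp
  linear_combination (n : ℝ) * keyR + (c : ℝ) * hdmR
end
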